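/- For $\lambda = (\lambda_1, \dots, \lambda_n) \in \mathbb{R}^n$ with $\lambda_1 \geq \cdots \geq \lambda_n$, the $n(n-1)/2$-dimensional Lebesgue volume of the Gelfand–Cetlin polytope $\Delta_{GC}(\lambda) \subseteq \mathbb{R}^{n(n-1)/2}$ equals $\prod_{1 \le i < j \le n} \frac{\lambda_i - \lambda_j}{j - i}$, i.e., it equals the leading homogeneous component $\phi_W(\lambda)$ of the Weyl dimension polynomial $F_W(\lambda) = \prod_{1 \le i < j \le n} \frac{\lambda_i - \lambda_j + j - i}{j - i}$ of $\mathrm{GL}(n,\mathbb{C})$. -/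

import Mathlib

open MeasureTheory

/-- Index set for the free entries of a Gelfand–Cetlin pattern for `GL(n)`:
rows `i = 1, …, n-1` (encoded by `Fin (n-1)`, row `i` being index `i - 1`), row `i`
having entries `j = 1, …, i` (encoded by `Fin i`).  It has `n(n-1)/2` elements. -/
abbrev GCIndex (n : ℕ) := (i : Fin (n - 1)) × Fin (i.val + 1)

/-- The `(i, j)` entry (in `1`-based coordinates, `1 ≤ j ≤ i ≤ n - 1`) of the triangular
array `x`, with the convention that row `n` is `λ`. -/
noncomputable def gcEntry (n : ℕ) (lam : ℕ → ℝ) (x : GCIndex n → ℝ) (i j : ℕ) : ℝ :=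
  if h : 1 ≤ j ∧ j ≤ i ∧ i ≤ n - 1 then
    x ⟨⟨i - 1, by omega⟩, ⟨j - 1, by show j - 1 < i - 1 + 1; omega⟩⟩
  else if i = n then lam j else 0

/-- The Gelfand–Cetlin polytope `Δ_GC(λ) ⊆ ℝ^{n(n-1)/2}` of `λ = (λ₁ ≥ ⋯ ≥ λₙ)`: triangular
arrays `(x_{i,j})_{1 ≤ j ≤ i ≤ n-1}` with the interlacing inequalities
`x_{i+1,j} ≥ x_{i,j} ≥ x_{i+1,j+1}` for `1 ≤ j ≤ i ≤ n-1`, where `x_{n,j} := λ_j`. -/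
noncomputable def gcPolytope (n : ℕ) (lam : ℕ → ℝ) : Set (GCIndex n → ℝ) :=
  {x | ∀ i j, 1 ≤ j → j ≤ i → i ≤ n - 1 →
    gcEntry n lam x i j ≤ gcEntry n lam x (i + 1) j ∧
    gcEntry n lam x (i + 1) (j + 1) ≤ gcEntry n lam x i j}

section Aux

open Matrix Finset Nat

/-! ### Combinatorial auxiliary lemmas -/

noncomputable def gcC (M : ℕ) : ℝ :=
  ∏ i : Fin M, ∏ j : Fin M, if i < j then ((j : ℝ) - (i : ℝ))⁻¹ else 1

lemma prod_cast_sub_eq_factorial (M : ℕ) :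
    ∏ i : Fin M, ((M : ℝ) - (i : ℝ)) = (M ! : ℝ) := by
  rw [Fin.prod_univ_eq_prod_range (fun i => ((M : ℝ) - (i : ℕ)))]
  rw [← Finset.prod_range_reflect]
  have : ((M ! : ℕ) : ℝ) = ∏ x ∈ Finset.range M, ((x + 1 : ℕ) : ℝ) := by
    rw [← Nat.cast_prod, Finset.prod_range_add_one_eq_factorial]
  rw [this]
  refine Finset.prod_congr rfl fun j hj => ?_
  rw [Finset.mem_range] at hj
  have h1 : (M - 1 - j : ℕ) = M - (j + 1) := by omega
  rw [h1, Nat.cast_sub (by omega)]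
  push_cast
  ring

lemma gcC_succ (M : ℕ) : gcC (M + 1) = gcC M * ((M ! : ℕ) : ℝ)⁻¹ := by
  unfold gcC
  rw [Fin.prod_univ_castSucc]
  have htop : ∏ j : Fin (M + 1),
      (if (Fin.last M) < j then ((j : ℝ) - ((Fin.last M : Fin (M+1)) : ℝ))⁻¹ else 1) = 1 :=
    Finset.prod_eq_one fun j _ => if_neg (not_lt.mpr (Fin.le_last j))
  rw [htop, mul_one]
  have hinner : ∀ i : Fin M, ∏ j : Fin (M + 1),
      (if i.castSucc < j then ((j : ℝ) - ((i.castSucc : Fin (M+1)) : ℝ))⁻¹ else 1)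
      = (∏ j : Fin M, if i < j then ((j : ℝ) - (i : ℝ))⁻¹ else 1) * ((M : ℝ) - (i : ℝ))⁻¹ := by
    intro i
    rw [Fin.prod_univ_castSucc, if_pos (Fin.castSucc_lt_last i)]
    simp only [Fin.coe_castSucc, Fin.val_last]
    refine congrArg₂ (· * ·) (Finset.prod_congr rfl fun j _ => ?_) rfl
    simp [Fin.castSucc_lt_castSucc_iff]
  rw [Finset.prod_congr rfl fun i _ => hinner i, Finset.prod_mul_distrib,
    Finset.prod_inv_distrib, prod_cast_sub_eq_factorial]

lemma gcC_nonneg (M : ℕ) : 0 ≤ gcC M := by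
  refine Finset.prod_nonneg fun i _ => Finset.prod_nonneg fun j _ => ?_
  by_cases h : i < j
  · rw [if_pos h]
    refine inv_nonneg.mpr (sub_nonneg.mpr ?_)
    exact_mod_cast (Fin.lt_def.mp h).le
  · rw [if_neg h]; exact zero_le_one

lemma det_vandermonde_eq_prod_ite {M : ℕ} (v : Fin M → ℝ) :
    (vandermonde v).det = ∏ i : Fin M, ∏ j : Fin M, if i < j then (v j - v i) else 1 := by
  rw [det_vandermonde]
  refine Finset.prod_congr rfl fun i _ => ?_
  have : Finset.Ioi i = Finset.univ.filter (fun j => i < j) := by ext; simp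
  rw [this, Finset.prod_filter]

lemma Q_eq (M : ℕ) (f : ℕ → ℝ) :
    (∏ i ∈ Finset.Icc 1 M, ∏ j ∈ Finset.Icc 1 M,
        if i < j then (f i - f j) / ((j : ℝ) - (i : ℝ)) else 1)
    = (vandermonde (fun k : Fin M => - f (k.val + 1))).det * gcC M := by
  have emb : Finset.Icc 1 M
      = (Finset.range M).map ⟨fun i => i + 1, add_left_injective 1⟩ := by
    ext x
    simp only [Finset.mem_Icc, Finset.mem_map, Finset.mem_range, Function.Embedding.coeFn_mk]
    constructor
    · rintro ⟨h1, h2⟩; exact ⟨x - 1, by omega, by omega⟩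
    · rintro ⟨a, h, rfl⟩; omega
  simp_rw [emb, Finset.prod_map, Function.Embedding.coeFn_mk]
  rw [det_vandermonde_eq_prod_ite, gcC, ← Finset.prod_mul_distrib]
  rw [← Fin.prod_univ_eq_prod_range]
  refine Finset.prod_congr rfl fun i _ => ?_
  rw [← Finset.prod_mul_distrib, ← Fin.prod_univ_eq_prod_range]
  refine Finset.prod_congr rfl fun j _ => ?_
  by_cases h : i < j
  · rw [if_pos (show (i : ℕ) + 1 < (j : ℕ) + 1 from by have := Fin.lt_def.mp h; omega),
      if_pos h, if_pos h]
    push_cast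
    rw [div_eq_mul_inv]
    congr 1
    · ring
    · congr 1; ring
  · have hn : ¬ ((i : ℕ) + 1 < (j : ℕ) + 1) := fun hc => h (Fin.lt_def.mpr (by omega))
    rw [if_neg hn, if_neg h, if_neg h, mul_one]

/-! ### The Vandermonde integral identity -/

lemma box_indicator_prod {m : ℕ} (s : Fin m → Set ℝ) (g : Fin m → ℝ → ℝ) :
    (Set.univ.pi s).indicator (fun x : Fin m → ℝ => ∏ k, g k (x k))
      = fun x => ∏ k, (s k).indicator (g k) (x k) := by
  funext x
  by_cases hx : x ∈ Set.univ.pi s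
  · rw [Set.indicator_of_mem hx]
    exact Finset.prod_congr rfl fun k _ =>
      (Set.indicator_of_mem (hx k (Set.mem_univ k)) _).symm
  · rw [Set.indicator_of_notMem hx]
    obtain ⟨k, -, hk⟩ : ∃ k, k ∈ Set.univ ∧ x k ∉ s k := by
      simpa [Set.mem_pi] using hx
    exact (Finset.prod_eq_zero (Finset.mem_univ k)
      (by simp [Set.indicator_of_notMem hk])).symm

lemma integral_box_prod_pow {m : ℕ} (a : Fin (m + 2) → ℝ)
    (ha : ∀ k : Fin (m + 1), a k.castSucc ≤ a k.succ) (e : Fin (m + 1) → ℕ) :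
    ∫ x in Set.univ.pi (fun k : Fin (m + 1) => Set.Icc (a k.castSucc) (a k.succ)),
      ∏ k, x k ^ e k
    = ∏ k, ((a k.succ ^ (e k + 1) - a k.castSucc ^ (e k + 1)) / (e k + 1)) := by
  rw [← integral_indicator (MeasurableSet.univ_pi fun k => measurableSet_Icc)]
  rw [box_indicator_prod (fun k => Set.Icc (a k.castSucc) (a k.succ)) (fun k t => t ^ e k)]
  rw [MeasureTheory.integral_fintype_prod_volume_eq_prod (𝕜 := ℝ)
    (f := fun k t => (Set.Icc (a k.castSucc) (a k.succ)).indicator (fun u => u ^ e k) t)]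
  refine Finset.prod_congr rfl fun k _ => ?_
  rw [integral_indicator measurableSet_Icc, MeasureTheory.integral_Icc_eq_integral_Ioc,
    ← intervalIntegral.integral_of_le (ha k), integral_pow]

lemma det_integrated_powers (m : ℕ) (a : Fin (m + 2) → ℝ) :
    (Matrix.of fun j k : Fin (m + 1) =>
        (a k.succ ^ ((j : ℕ) + 1) - a k.castSucc ^ ((j : ℕ) + 1)) / ((j : ℕ) + 1)).det
    = (vandermonde a).det / (m + 1)! := by
  set h2 : Matrix (Fin (m + 1)) (Fin (m + 1)) ℝ := Matrix.of fun j k =>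
    (a k.succ ^ ((j : ℕ) + 1) - a 0 ^ ((j : ℕ) + 1)) / ((j : ℕ) + 1) with hh2
  set h3 : Matrix (Fin (m + 1)) (Fin (m + 1)) ℝ := Matrix.of fun j k =>
    a k.succ ^ ((j : ℕ) + 1) - a 0 ^ ((j : ℕ) + 1) with hh3
  have d1 : h2.det = (Matrix.of fun j k : Fin (m + 1) =>
      (a k.succ ^ ((j : ℕ) + 1) - a k.castSucc ^ ((j : ℕ) + 1)) / ((j : ℕ) + 1)).det := by
    refine Matrix.det_eq_of_forall_col_eq_smul_add_pred (fun _ => 1) (fun i => ?_) (fun i j => ?_)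
    · simp [hh2, Fin.castSucc_zero]
    · show (a j.succ.succ ^ ((i : ℕ) + 1) - a 0 ^ ((i : ℕ) + 1)) / ((i : ℕ) + 1)
        = (a j.succ.succ ^ ((i : ℕ) + 1) - a j.succ.castSucc ^ ((i : ℕ) + 1)) / ((i : ℕ) + 1)
          + 1 * ((a j.castSucc.succ ^ ((i : ℕ) + 1) - a 0 ^ ((i : ℕ) + 1)) / ((i : ℕ) + 1))
      rw [Fin.succ_castSucc]
      ring
  have d2 : h2.det = (∏ j : Fin (m + 1), (((j : ℕ) : ℝ) + 1)⁻¹) * h3.det := by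
    have hc : h2 = Matrix.of fun j k : Fin (m + 1) => (((j : ℕ) : ℝ) + 1)⁻¹ * h3 j k := by
      ext j k
      simp only [hh2, hh3, Matrix.of_apply]
      rw [div_eq_inv_mul]
    rw [hc, Matrix.det_mul_column]
  have d3 : h3.det = (vandermonde a).det := by
    set E : Matrix (Fin (m + 2)) (Fin (m + 2)) ℝ := Matrix.of fun j k =>
      if j = 0 then 1 else a k ^ (j : ℕ) - a 0 ^ (j : ℕ) with hE
    have e1 : E.det = (vandermonde a)ᵀ.det := by
      refine Matrix.det_eq_of_forall_row_eq_smul_add_const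
        (fun j => if j = 0 then 0 else -(a 0 ^ (j : ℕ))) 0 (if_pos rfl) (fun i j => ?_)
      by_cases hi : i = 0
      · subst hi; simp [hE]
      · simp only [hE, Matrix.of_apply, if_neg hi, Matrix.transpose_apply, vandermonde_apply,
          Fin.val_zero, pow_zero, one_mul]
        ring
    have e2 : E.det = h3.det := by
      rw [Matrix.det_succ_column_zero]
      have hsub : E.submatrix (Fin.succAbove 0) Fin.succ = h3 := by
        ext j k
        simp only [Matrix.submatrix_apply, hE, Matrix.of_apply, hh3, Fin.succAbove_zero]
        rw [if_neg (Fin.succ_ne_zero j)]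
        simp [Fin.val_succ]
      rw [Finset.sum_eq_single 0]
      · rw [hsub]
        simp [hE]
      · intro i _ hi
        have hz : E i 0 = 0 := by
          simp only [hE, Matrix.of_apply, if_neg hi]
          ring
        rw [hz]
        simp
      · intro h; exact absurd (Finset.mem_univ _) h
    rw [← e2, e1, Matrix.det_transpose]
  have hfac : ∏ j : Fin (m + 1), (((j : ℕ) : ℝ) + 1)⁻¹ = (((m + 1)! : ℕ) : ℝ)⁻¹ := by
    rw [Finset.prod_inv_distrib]
    congr 1
    rw [Fin.prod_univ_eq_prod_range (fun j => ((j : ℝ) + 1)),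
      ← Finset.prod_range_add_one_eq_factorial (m + 1), Nat.cast_prod]
    exact Finset.prod_congr rfl fun j _ => by push_cast; ring
  rw [← d1, d2, d3, hfac, div_eq_inv_mul]

lemma integral_box_det_vandermonde (m : ℕ) (a : Fin (m + 2) → ℝ)
    (ha : ∀ k : Fin (m + 1), a k.castSucc ≤ a k.succ) :
    ∫ x in Set.univ.pi (fun k : Fin (m + 1) => Set.Icc (a k.castSucc) (a k.succ)),
      (vandermonde x).det
    = (vandermonde a).det / (m + 1)! := by
  set B : Set (Fin (m + 1) → ℝ) :=
    Set.univ.pi (fun k : Fin (m + 1) => Set.Icc (a k.castSucc) (a k.succ)) with hB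
  have hcompact : IsCompact B := isCompact_univ_pi fun k => isCompact_Icc
  have hint : ∀ σ : Equiv.Perm (Fin (m + 1)),
      IntegrableOn (fun x : Fin (m + 1) → ℝ =>
        ((Equiv.Perm.sign σ : ℤ) : ℝ) * ∏ k, x k ^ ((σ⁻¹ k : Fin (m + 1)) : ℕ)) B := by
    intro σ
    exact (continuous_const.mul
      (continuous_finset_prod _ fun k _ =>
        (continuous_apply k).pow _)).continuousOn.integrableOn_compact hcompact
  calc ∫ x in B, (vandermonde x).det
      = ∫ x in B, ∑ σ : Equiv.Perm (Fin (m + 1)),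
          ((Equiv.Perm.sign σ : ℤ) : ℝ) * ∏ k, x k ^ ((σ⁻¹ k : Fin (m + 1)) : ℕ) := by
        refine integral_congr_ae (Filter.Eventually.of_forall fun x => ?_)
        dsimp only
        rw [Matrix.det_apply']
        refine Finset.sum_congr rfl fun σ _ => ?_
        congr 1
        rw [← Equiv.prod_comp σ (fun k => x k ^ ((σ⁻¹ k : Fin (m + 1)) : ℕ))]
        exact Finset.prod_congr rfl fun i _ => by
          rw [show σ⁻¹ (σ i) = i from σ.symm_apply_apply i]
          rfl
    _ = ∑ σ : Equiv.Perm (Fin (m + 1)), ((Equiv.Perm.sign σ : ℤ) : ℝ) *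
          ∏ k, ((a k.succ ^ (((σ⁻¹ k : Fin (m + 1)) : ℕ) + 1)
              - a k.castSucc ^ (((σ⁻¹ k : Fin (m + 1)) : ℕ) + 1))
            / (((σ⁻¹ k : Fin (m + 1)) : ℕ) + 1)) := by
        rw [integral_finset_sum _ fun σ _ => hint σ]
        refine Finset.sum_congr rfl fun σ _ => ?_
        rw [MeasureTheory.integral_const_mul, integral_box_prod_pow a ha]
    _ = ∑ σ : Equiv.Perm (Fin (m + 1)), ((Equiv.Perm.sign σ : ℤ) : ℝ) *
          ∏ k, ((a k.succ ^ (((σ k : Fin (m + 1)) : ℕ) + 1)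
              - a k.castSucc ^ (((σ k : Fin (m + 1)) : ℕ) + 1))
            / (((σ k : Fin (m + 1)) : ℕ) + 1)) := by
        refine Fintype.sum_equiv (Equiv.inv (Equiv.Perm (Fin (m + 1)))) _ _ fun σ => ?_
        simp [Equiv.inv_apply]
    _ = (Matrix.of fun j k : Fin (m + 1) =>
          (a k.succ ^ ((j : ℕ) + 1) - a k.castSucc ^ ((j : ℕ) + 1)) / ((j : ℕ) + 1)).det := by
        rw [Matrix.det_apply']
        simp only [Matrix.of_apply]
    _ = (vandermonde a).det / (m + 1)! := det_integrated_powers m a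

/-! ### The reindexing equivalence and measure-preserving glue map -/

def gcEquiv (m : ℕ) : (Fin (m + 1) ⊕ GCIndex (m + 1)) ≃ GCIndex (m + 2) where
  toFun s := match s with
    | Sum.inl k => ⟨⟨m, by omega⟩, ⟨k.val, by show k.val < m + 1; exact k.isLt⟩⟩
    | Sum.inr p => ⟨⟨p.1.val, by have := p.1.isLt; omega⟩,
        ⟨p.2.val, by show p.2.val < p.1.val + 1; exact p.2.isLt⟩⟩
  invFun q :=
    if h : q.1.val < m then
      Sum.inr ⟨⟨q.1.val, by have := q.1.isLt; omega⟩,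
        ⟨q.2.val, by show q.2.val < q.1.val + 1; exact q.2.isLt⟩⟩
    else Sum.inl ⟨q.2.val, by have := q.2.isLt; have := q.1.isLt; omega⟩
  left_inv s := by
    rcases s with k | ⟨i, j⟩
    · simp
    · have hi : i.val < m := by have := i.isLt; omega
      simp [hi]
  right_inv q := by
    obtain ⟨⟨iv, hiv⟩, ⟨jv, hjv⟩⟩ := q
    by_cases h : iv < m
    · simp [h]
    · have : iv = m := by omega
      subst this
      simp [h]

noncomputable def gcT (m : ℕ) :
    ((Fin (m + 1) → ℝ) × (GCIndex (m + 1) → ℝ)) ≃ᵐ (GCIndex (m + 2) → ℝ) :=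
  (MeasurableEquiv.sumPiEquivProdPi (fun _ : Fin (m + 1) ⊕ GCIndex (m + 1) => ℝ)).symm.trans
    (MeasurableEquiv.piCongrLeft (fun _ => ℝ) (gcEquiv m))

lemma gcT_measurePreserving (m : ℕ) : MeasurePreserving (gcT m) volume volume := by
  have h1 := MeasureTheory.volume_measurePreserving_sumPiEquivProdPi_symm
    (fun _ : Fin (m + 1) ⊕ GCIndex (m + 1) => ℝ)
  have h2 := MeasureTheory.volume_measurePreserving_piCongrLeft
    (fun _ : GCIndex (m + 2) => ℝ) (gcEquiv m)
  exact h2.comp h1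

lemma gcT_inl (m : ℕ) (μ : Fin (m + 1) → ℝ) (y : GCIndex (m + 1) → ℝ) (k : Fin (m + 1)) :
    gcT m (μ, y) (gcEquiv m (Sum.inl k)) = μ k := by
  show (MeasurableEquiv.piCongrLeft (fun _ => ℝ) (gcEquiv m))
      ((MeasurableEquiv.sumPiEquivProdPi (fun _ : Fin (m + 1) ⊕ GCIndex (m + 1) => ℝ)).symm (μ, y))
      (gcEquiv m (Sum.inl k)) = μ k
  rw [MeasurableEquiv.coe_piCongrLeft, MeasurableEquiv.coe_sumPiEquivProdPi_symm]
  exact Equiv.piCongrLeft_sumInl (fun _ => ℝ) (gcEquiv m) μ y k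

lemma gcT_inr (m : ℕ) (μ : Fin (m + 1) → ℝ) (y : GCIndex (m + 1) → ℝ) (p : GCIndex (m + 1)) :
    gcT m (μ, y) (gcEquiv m (Sum.inr p)) = y p := by
  show (MeasurableEquiv.piCongrLeft (fun _ => ℝ) (gcEquiv m))
      ((MeasurableEquiv.sumPiEquivProdPi (fun _ : Fin (m + 1) ⊕ GCIndex (m + 1) => ℝ)).symm (μ, y))
      (gcEquiv m (Sum.inr p)) = y p
  rw [MeasurableEquiv.coe_piCongrLeft, MeasurableEquiv.coe_sumPiEquivProdPi_symm]
  exact Equiv.piCongrLeft_sumInr (fun _ => ℝ) (gcEquiv m) μ y p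

/-! ### gcEntry lemmas -/

def gcLam' (m : ℕ) (μ : Fin (m + 1) → ℝ) : ℕ → ℝ :=
  fun j => if h : j - 1 < m + 1 then μ ⟨j - 1, h⟩ else 0

lemma measurable_gcEntry (n : ℕ) (lam : ℕ → ℝ) (i j : ℕ) :
    Measurable fun x : GCIndex n → ℝ => gcEntry n lam x i j := by
  unfold gcEntry
  split_ifs
  · exact measurable_pi_apply _
  · exact measurable_const
  · exact measurable_const

lemma gcPolytope_measurableSet (n : ℕ) (lam : ℕ → ℝ) :
    MeasurableSet (gcPolytope n lam) := by
  have hrw : gcPolytope n lam = ⋂ (i : ℕ), ⋂ (j : ℕ),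
      {x : GCIndex n → ℝ | 1 ≤ j → j ≤ i → i ≤ n - 1 →
        (gcEntry n lam x i j ≤ gcEntry n lam x (i + 1) j ∧
         gcEntry n lam x (i + 1) (j + 1) ≤ gcEntry n lam x i j)} := by
    ext x
    simp only [gcPolytope, Set.mem_setOf_eq, Set.mem_iInter]
  rw [hrw]
  refine MeasurableSet.iInter fun i => MeasurableSet.iInter fun j => ?_
  rcases Classical.em (1 ≤ j ∧ j ≤ i ∧ i ≤ n - 1) with h | h
  · have : {x : GCIndex n → ℝ | 1 ≤ j → j ≤ i → i ≤ n - 1 →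
        (gcEntry n lam x i j ≤ gcEntry n lam x (i + 1) j ∧
         gcEntry n lam x (i + 1) (j + 1) ≤ gcEntry n lam x i j)}
        = {x | gcEntry n lam x i j ≤ gcEntry n lam x (i + 1) j} ∩
          {x | gcEntry n lam x (i + 1) (j + 1) ≤ gcEntry n lam x i j} := by
      ext x
      simp only [Set.mem_setOf_eq, Set.mem_inter_iff]
      constructor
      · intro hx; exact hx h.1 h.2.1 h.2.2
      · intro hx _ _ _; exact hx
    rw [this]
    exact (measurableSet_le (measurable_gcEntry n lam i j) (measurable_gcEntry n lam (i+1) j)).inter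
      (measurableSet_le (measurable_gcEntry n lam (i+1) (j+1)) (measurable_gcEntry n lam i j))
  · have : {x : GCIndex n → ℝ | 1 ≤ j → j ≤ i → i ≤ n - 1 →
        (gcEntry n lam x i j ≤ gcEntry n lam x (i + 1) j ∧
         gcEntry n lam x (i + 1) (j + 1) ≤ gcEntry n lam x i j)} = Set.univ := by
      ext x
      simp only [Set.mem_setOf_eq, Set.mem_univ, iff_true]
      intro h1 h2 h3
      exact absurd ⟨h1, h2, h3⟩ h
    rw [this]
    exact MeasurableSet.univ

lemma gcEntry_glue_low (m : ℕ) (lam : ℕ → ℝ) (μ : Fin (m + 1) → ℝ) (y : GCIndex (m + 1) → ℝ)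
    {i j : ℕ} (h1 : 1 ≤ j) (h2 : j ≤ i) (h3 : i ≤ m + 1) :
    gcEntry (m + 2) lam (gcT m (μ, y)) i j = gcEntry (m + 1) (gcLam' m μ) y i j := by
  by_cases hi : i ≤ m
  · unfold gcEntry
    rw [dif_pos ⟨h1, h2, by omega⟩, dif_pos ⟨h1, h2, by omega⟩]
    exact gcT_inr m μ y ⟨⟨i - 1, by omega⟩, ⟨j - 1, by show j - 1 < (i - 1) + 1; omega⟩⟩
  · have hi1 : i = m + 1 := by omega
    subst hi1
    unfold gcEntry
    rw [dif_pos ⟨h1, h2, by omega⟩, dif_neg (by omega), if_pos rfl]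
    unfold gcLam'
    rw [dif_pos (by omega)]
    exact gcT_inl m μ y ⟨j - 1, by omega⟩

lemma gcEntry_top (m : ℕ) (lam : ℕ → ℝ) (μ : Fin (m + 1) → ℝ) (y : GCIndex (m + 1) → ℝ)
    {j : ℕ} (h1 : 1 ≤ j) (h2 : j ≤ m + 1) :
    gcEntry (m + 2) lam (gcT m (μ, y)) (m + 1) j = μ ⟨j - 1, by omega⟩ := by
  unfold gcEntry
  rw [dif_pos ⟨h1, by omega, by omega⟩]
  exact gcT_inl m μ y ⟨j - 1, by omega⟩

lemma gcEntry_last (m : ℕ) (lam : ℕ → ℝ) (z : GCIndex (m + 2) → ℝ) (j : ℕ) :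
    gcEntry (m + 2) lam z (m + 2) j = lam j := by
  unfold gcEntry
  rw [dif_neg (by omega), if_pos rfl]

/-! ### The fiber description -/

lemma gc_fiber (m : ℕ) (lam : ℕ → ℝ) (μ : Fin (m + 1) → ℝ) (y : GCIndex (m + 1) → ℝ) :
    gcT m (μ, y) ∈ gcPolytope (m + 2) lam ↔
      (μ ∈ Set.univ.pi (fun k : Fin (m + 1) => Set.Icc (lam (k.val + 2)) (lam (k.val + 1)))
       ∧ y ∈ gcPolytope (m + 1) (gcLam' m μ)) := by
  constructor
  · intro h
    refine ⟨fun k _ => ?_, fun i j h1 h2 h3 => ?_⟩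
    · have hc := h (m + 1) (k.val + 1) (by omega) (by omega) (by omega)
      rw [gcEntry_top m lam μ y (by omega) (by omega),
        gcEntry_last, gcEntry_last] at hc
      refine ⟨?_, ?_⟩
      · simpa using hc.2
      · simpa using hc.1
    · have h3' : i ≤ m := by omega
      have hc := h i j h1 h2 (by omega)
      rw [gcEntry_glue_low m lam μ y h1 h2 (by omega),
        gcEntry_glue_low m lam μ y (i := i + 1) (j := j) h1 (by omega) (by omega),
        gcEntry_glue_low m lam μ y (i := i + 1) (j := j + 1) (by omega) (by omega)
          (by omega)] at hc
      exact hc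
  · rintro ⟨hbox, hy⟩ i j h1 h2 h3
    by_cases hi : i ≤ m
    · have hc := hy i j h1 h2 (by omega)
      rw [gcEntry_glue_low m lam μ y h1 h2 (by omega),
        gcEntry_glue_low m lam μ y (i := i + 1) (j := j) h1 (by omega) (by omega),
        gcEntry_glue_low m lam μ y (i := i + 1) (j := j + 1) (by omega) (by omega) (by omega)]
      exact hc
    · have hi1 : i = m + 1 := by omega
      subst hi1
      have hb := hbox ⟨j - 1, by omega⟩ (Set.mem_univ _)
      simp only [Set.mem_Icc] at hb
      rw [gcEntry_top m lam μ y h1 (by omega), gcEntry_last, gcEntry_last]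
      have e1 : j - 1 + 1 = j := by omega
      have e2 : j - 1 + 2 = j + 1 := by omega
      rw [e1, e2] at hb
      exact ⟨hb.2, hb.1⟩

end Aux

section Main

open Matrix Finset Nat

theorem gc_volume : ∀ (n : ℕ) (lam : ℕ → ℝ),
    (∀ i j, 1 ≤ i → i ≤ j → j ≤ n → lam j ≤ lam i) →
    volume (gcPolytope n lam) = ENNReal.ofReal
      (∏ i ∈ Finset.Icc 1 n, ∏ j ∈ Finset.Icc 1 n,
        if i < j then (lam i - lam j) / ((j : ℝ) - (i : ℝ)) else 1) := by
  have huniv : ∀ (n : ℕ) (lam : ℕ → ℝ), n ≤ 1 →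
      volume (gcPolytope n lam) = 1 := by
    intro n lam hn
    have hempty : IsEmpty (GCIndex n) := ⟨fun p => absurd p.1.isLt (by omega)⟩
    have hpoly : gcPolytope n lam = Set.univ := by
      ext x
      refine ⟨fun _ => trivial, fun _ i j h1 h2 h3 => absurd h3 (by omega)⟩
    rw [hpoly]
    have : (volume : Measure (GCIndex n → ℝ)) Set.univ
        = ∏ i : GCIndex n, (volume : Measure ℝ) Set.univ := by
      exact Measure.pi_univ _
    rw [this]
    simp
  intro n
  induction n with
  | zero =>
    intro lam _
    rw [huniv 0 lam (by omega)]
    simp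
  | succ n ih =>
    rcases Nat.eq_zero_or_pos n with rfl | hn
    · intro lam _
      rw [huniv 1 lam (by omega)]
      simp
    · obtain ⟨m, rfl⟩ : ∃ m, n = m + 1 := ⟨n - 1, by omega⟩
      intro lam hlam
      -- the setup
      set box : Set (Fin (m + 1) → ℝ) :=
        Set.univ.pi (fun k : Fin (m + 1) => Set.Icc (lam (k.val + 2)) (lam (k.val + 1))) with hbox
      have hboxm : MeasurableSet box := MeasurableSet.univ_pi fun k => measurableSet_Icc
      have hS : MeasurableSet (gcPolytope (m + 2) lam) := gcPolytope_measurableSet _ _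
      have hT := gcT_measurePreserving m
      have hpre : MeasurableSet (⇑(gcT m) ⁻¹' gcPolytope (m + 2) lam) :=
        (gcT m).measurable hS
      -- the target vandermonde data
      set a : Fin (m + 2) → ℝ := fun k => -lam (k.val + 1) with ha
      have haux : ∀ k : Fin (m + 1), a k.castSucc ≤ a k.succ := by
        intro k
        simp only [ha, Fin.coe_castSucc, Fin.val_succ]
        have := hlam (k.val + 1) (k.val + 2) (by omega) (by omega) (by omega)
        linarith
      have hbox_eq : box = Set.univ.pi
          (fun k : Fin (m + 1) => Set.Icc (lam (k.val + 2)) (lam (k.val + 1))) := hbox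
      -- monotonicity of the fiber data
      have hlam' : ∀ μ ∈ box, ∀ i j, 1 ≤ i → i ≤ j → j ≤ m + 1 →
          gcLam' m μ j ≤ gcLam' m μ i := by
        intro μ hμ i j h1 h2 h3
        unfold gcLam'
        rw [dif_pos (by omega), dif_pos (by omega)]
        rcases eq_or_lt_of_le h2 with rfl | hlt
        · exact le_refl _
        · have hj := (hμ ⟨j - 1, by omega⟩ (Set.mem_univ _)).2
          have hi := (hμ ⟨i - 1, by omega⟩ (Set.mem_univ _)).1
          simp only at hj hi
          have e1 : j - 1 + 1 = j := by omega
          have e2 : i - 1 + 2 = i + 1 := by omega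
          rw [e1] at hj
          rw [e2] at hi
          calc μ ⟨j - 1, by omega⟩ ≤ lam j := hj
            _ ≤ lam (i + 1) := hlam (i + 1) j (by omega) (by omega) (by omega)
            _ ≤ μ ⟨i - 1, by omega⟩ := hi
      -- antitonicity of μ on the box
      have hmono : ∀ μ ∈ box, ∀ i j : Fin (m + 1), i < j → μ j ≤ μ i := by
        intro μ hμ i j hij
        have hj := (hμ j (Set.mem_univ _)).2
        have hi := (hμ i (Set.mem_univ _)).1
        calc μ j ≤ lam (j.val + 1) := hj
          _ ≤ lam (i.val + 2) := hlam (i.val + 2) (j.val + 1)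
              (by omega) (by have := Fin.lt_def.mp hij; omega) (by have := j.isLt; omega)
          _ ≤ μ i := hi
      -- continuity/integrability of the integrand
      have hcontdet : Continuous fun μ : Fin (m + 1) → ℝ =>
          (vandermonde (fun k => -μ k)).det := by
        have : Continuous fun μ : Fin (m + 1) → ℝ => vandermonde (fun k => -μ k) :=
          continuous_matrix fun i j => ((continuous_apply i).neg.pow _)
        exact this.matrix_det
      have hInt : IntegrableOn
          (fun μ : Fin (m + 1) → ℝ => (vandermonde (fun k => -μ k)).det * gcC (m + 1)) box :=
        ((hcontdet.mul continuous_const).continuousOn.integrableOn_compact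
          (isCompact_univ_pi fun k => isCompact_Icc))
      have hnn : 0 ≤ᵐ[volume.restrict box]
          (fun μ : Fin (m + 1) → ℝ => (vandermonde (fun k => -μ k)).det * gcC (m + 1)) := by
        refine Filter.eventually_of_mem (self_mem_ae_restrict hboxm) fun μ hμ => ?_
        refine mul_nonneg ?_ (gcC_nonneg _)
        rw [det_vandermonde_eq_prod_ite]
        refine Finset.prod_nonneg fun i _ => Finset.prod_nonneg fun j _ => ?_
        by_cases hij : i < j
        · rw [if_pos hij]
          have := hmono μ hμ i j hij
          linarith
        · rw [if_neg hij]; exact zero_le_one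
      -- the main computation
      calc volume (gcPolytope (m + 2) lam)
          = volume (⇑(gcT m) ⁻¹' gcPolytope (m + 2) lam) :=
            (hT.measure_preimage hS.nullMeasurableSet).symm
        _ = ∫⁻ μ, volume (Prod.mk μ ⁻¹' (⇑(gcT m) ⁻¹' gcPolytope (m + 2) lam)) := by
            rw [Measure.volume_eq_prod, Measure.prod_apply hpre]
        _ = ∫⁻ μ, box.indicator
              (fun μ => volume (gcPolytope (m + 1) (gcLam' m μ))) μ := by
            refine lintegral_congr fun μ => ?_
            by_cases hμ : μ ∈ box
            · have hfib : (Prod.mk μ ⁻¹' (⇑(gcT m) ⁻¹' gcPolytope (m + 2) lam))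
                  = gcPolytope (m + 1) (gcLam' m μ) := by
                ext y
                simp only [Set.mem_preimage]
                rw [gc_fiber m lam μ y]
                exact ⟨fun h => h.2, fun h => ⟨hμ, h⟩⟩
              rw [hfib, Set.indicator_of_mem hμ]
            · have hfib : (Prod.mk μ ⁻¹' (⇑(gcT m) ⁻¹' gcPolytope (m + 2) lam)) = ∅ := by
                ext y
                simp only [Set.mem_preimage, Set.mem_empty_iff_false, iff_false]
                intro hcon
                exact hμ ((gc_fiber m lam μ y).mp hcon).1
              rw [hfib, Set.indicator_of_notMem hμ, measure_empty]
        _ = ∫⁻ μ in box, volume (gcPolytope (m + 1) (gcLam' m μ)) :=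
            lintegral_indicator hboxm _
        _ = ∫⁻ μ in box, ENNReal.ofReal
              ((vandermonde (fun k => -μ k)).det * gcC (m + 1)) := by
            refine setLIntegral_congr_fun hboxm (fun μ hμ => ?_)
            rw [ih (gcLam' m μ) (hlam' μ hμ)]
            congr 1
            rw [Q_eq (m + 1) (gcLam' m μ)]
            have hfun : (fun k : Fin (m + 1) => -gcLam' m μ (k.val + 1))
                = fun k => -μ k := by
              funext k
              unfold gcLam'
              rw [dif_pos (show k.val + 1 - 1 < m + 1 by have := k.isLt; omega)]
              exact congrArg (fun t => -μ t)
                (Fin.ext (show k.val + 1 - 1 = k.val by omega))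
            rw [hfun]
        _ = ENNReal.ofReal (∫ μ in box, (vandermonde (fun k => -μ k)).det * gcC (m + 1)) :=
            (ofReal_integral_eq_lintegral_ofReal hInt hnn).symm
        _ = ENNReal.ofReal ((vandermonde a).det / (m + 1)! * gcC (m + 1)) := by
            congr 1
            rw [MeasureTheory.integral_mul_const]
            congr 1
            -- the substitution μ ↦ -μ
            have hbox' : MeasurableSet (Set.univ.pi
                (fun k : Fin (m + 1) => Set.Icc (a k.castSucc) (a k.succ))) :=
              MeasurableSet.univ_pi fun k => measurableSet_Icc
            have hpt : ∀ x : Fin (m + 1) → ℝ,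
                box.indicator (fun μ => (vandermonde (fun k => -μ k)).det) x
                = (Set.univ.pi (fun k : Fin (m + 1) =>
                    Set.Icc (a k.castSucc) (a k.succ))).indicator
                    (fun z => (vandermonde z).det) (-x) := by
              intro x
              have hmem : x ∈ box ↔ (-x) ∈ Set.univ.pi
                  (fun k : Fin (m + 1) => Set.Icc (a k.castSucc) (a k.succ)) := by
                simp only [hbox, Set.mem_pi, Set.mem_univ, forall_true_left, Set.mem_Icc,
                  Pi.neg_apply, ha, Fin.coe_castSucc, Fin.val_succ]
                constructor
                · intro hx k
                  have h1 := (hx k).1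
                  have h2 := (hx k).2
                  exact ⟨by linarith, by linarith⟩
                · intro hx k
                  have h1 := (hx k).1
                  have h2 := (hx k).2
                  exact ⟨by linarith, by linarith⟩
              by_cases hx : x ∈ box
              · rw [Set.indicator_of_mem hx, Set.indicator_of_mem (hmem.mp hx)]
                rfl
              · rw [Set.indicator_of_notMem hx,
                  Set.indicator_of_notMem (fun hc => hx (hmem.mpr hc))]
            calc ∫ μ in box, (vandermonde (fun k => -μ k)).det
                = ∫ x, box.indicator (fun μ => (vandermonde (fun k => -μ k)).det) x :=
                  (integral_indicator hboxm).symm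
              _ = ∫ x, (Set.univ.pi (fun k : Fin (m + 1) =>
                    Set.Icc (a k.castSucc) (a k.succ))).indicator
                    (fun z => (vandermonde z).det) (-x) :=
                  integral_congr_ae (Filter.Eventually.of_forall hpt)
              _ = ∫ x, (Set.univ.pi (fun k : Fin (m + 1) =>
                    Set.Icc (a k.castSucc) (a k.succ))).indicator
                    (fun z => (vandermonde z).det) x :=
                  integral_neg_eq_self _ _
              _ = ∫ x in Set.univ.pi (fun k : Fin (m + 1) =>
                    Set.Icc (a k.castSucc) (a k.succ)), (vandermonde x).det :=
                  integral_indicator hbox'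
              _ = (vandermonde a).det / (m + 1)! := integral_box_det_vandermonde m a haux
        _ = ENNReal.ofReal
            (∏ i ∈ Finset.Icc 1 (m + 2), ∏ j ∈ Finset.Icc 1 (m + 2),
              if i < j then (lam i - lam j) / ((j : ℝ) - (i : ℝ)) else 1) := by
            congr 1
            rw [Q_eq (m + 2) lam, gcC_succ (m + 1)]
            have : (vandermonde fun k : Fin (m + 2) => -lam (k.val + 1)) = vandermonde a := rfl
            rw [this]
            rw [div_eq_mul_inv]
            ring

end Main

/-- The Lebesgue volume of the Gelfand–Cetlin polytope of `λ = (λ₁ ≥ ⋯ ≥ λₙ)` equals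
`∏_{1 ≤ i < j ≤ n} (λᵢ - λⱼ)/(j - i)`, the leading homogeneous component of the Weyl
dimension polynomial of `GL(n, ℂ)`. -/
theorem volume_gcPolytope (n : ℕ) (lam : ℕ → ℝ)
    (hlam : ∀ i j, 1 ≤ i → i ≤ j → j ≤ n → lam j ≤ lam i) :
    (volume (gcPolytope n lam)).toReal =
      ∏ i ∈ Finset.Icc 1 n, ∏ j ∈ Finset.Icc 1 n,
        if i < j then (lam i - lam j) / ((j : ℝ) - (i : ℝ)) else 1 := by
  rw [gc_volume n lam hlam]
  rw [ENNReal.toReal_ofReal]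
  refine Finset.prod_nonneg fun i hi => Finset.prod_nonneg fun j hj => ?_
  simp only [Finset.mem_Icc] at hi hj
  by_cases h : i < j
  · rw [if_pos h]
    refine div_nonneg ?_ ?_
    · have := hlam i j hi.1 h.le hj.2
      linarith
    · have : (i : ℝ) ≤ (j : ℝ) := by exact_mod_cast h.le
      linarith
  · rw [if_neg h]; exact zero_le_one
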